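/- The lowest generalized Dellac configuration C_0(l,m,n) has exactly n·C(m,2)·C(l,2) inversions, where C(a,2) = a(a-1)/2. -/

import Mathlib

/-- Ceiling division `⌈j/l⌉`. -/
def ceilDiv' (j l : ℕ) : ℕ := (j + l - 1) / l

/-- A generalized Dellac configuration of size `n` with type `(l,m)`: a set of dots
`(i,j)` (`i` = row from bottom, `j` = column, both 1-based) in an `mn × ln` grid with
`l` dots per row, `m` dots per column, and `⌈j/l⌉ ≤ i ≤ ⌈j/l⌉ + (m-1)n` for each dot. -/
def IsGenDellac (l m n : ℕ) (C : Finset (ℕ × ℕ)) : Prop :=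
  (∀ d ∈ C, 1 ≤ d.1 ∧ d.1 ≤ m * n ∧ 1 ≤ d.2 ∧ d.2 ≤ l * n ∧
      ceilDiv' d.2 l ≤ d.1 ∧ d.1 ≤ ceilDiv' d.2 l + (m - 1) * n) ∧
  (∀ i ∈ Finset.Icc 1 (m * n), (C.filter (fun d => d.1 = i)).card = l) ∧
  (∀ j ∈ Finset.Icc 1 (l * n), (C.filter (fun d => d.2 = j)).card = m)

/-- Number of inversions of a configuration: pairs of dots `(d₁,d₂)` with `d₁` in a
strictly lower row and strictly greater column than `d₂`. -/
def invDC (C : Finset (ℕ × ℕ)) : ℕ :=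
  ((C ×ˢ C).filter (fun p => p.1.1 < p.2.1 ∧ p.2.2 < p.1.2)).card

/-- The lowest configuration `C₀(l,m,n)`: column `j = pl+q` has dots in rows `pm+1,...,(p+1)m`. -/
def lowestC (l m n : ℕ) : Finset (ℕ × ℕ) :=
  (Finset.Icc 1 (m * n) ×ˢ Finset.Icc 1 (l * n)).filter
    (fun d => (d.2 - 1) / l * m + 1 ≤ d.1 ∧ d.1 ≤ ((d.2 - 1) / l + 1) * m)

lemma mem_lowestC {l m n i j : ℕ} :
    (i, j) ∈ lowestC l m n ↔
      1 ≤ i ∧ i ≤ m * n ∧ 1 ≤ j ∧ j ≤ l * n ∧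
        (j - 1) / l * m + 1 ≤ i ∧ i ≤ ((j - 1) / l + 1) * m := by
  simp [lowestC, Finset.mem_filter, Finset.mem_product, Finset.mem_Icc, and_assoc]

lemma div_block {l p q : ℕ} (hq1 : 1 ≤ q) (hq2 : q ≤ l) : (p * l + q - 1) / l = p := by
  have h : p * l + q - 1 = (q - 1) + p * l := by omega
  rw [h, Nat.add_mul_div_right _ _ (by omega : 0 < l), Nat.div_eq_of_lt (by omega)]
  omega

lemma card_ltPairs (k : ℕ) :
    ((Finset.Icc 1 k ×ˢ Finset.Icc 1 k).filter fun q => q.1 < q.2).card = k.choose 2 := by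
  rw [Finset.card_filter, Finset.sum_product]
  have h1 : ∀ a ∈ Finset.Icc 1 k, (∑ b ∈ Finset.Icc 1 k, if a < b then (1:ℕ) else 0) = k - a := by
    intro a ha
    rw [← Finset.card_filter]
    have : (Finset.Icc 1 k).filter (fun b => a < b) = Finset.Icc (a+1) k := by
      ext b
      simp only [Finset.mem_filter, Finset.mem_Icc]
      omega
    rw [this, Nat.card_Icc]
    omega
  rw [Finset.sum_congr rfl h1]
  have h2 : Finset.Icc 1 k = (Finset.range k).image (· + 1) := by
    ext b
    simp only [Finset.mem_Icc, Finset.mem_image, Finset.mem_range]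
    constructor
    · rintro ⟨hb1, hb2⟩; exact ⟨b - 1, by omega, by omega⟩
    · rintro ⟨a, ha, rfl⟩; omega
  rw [h2, Finset.sum_image (by intros _ _ _ _ h; exact Nat.add_right_cancel h)]
  have h3 : ∀ i ∈ Finset.range k, k - (i + 1) = k - 1 - i := by intros; omega
  rw [Finset.sum_congr rfl h3, Finset.sum_range_reflect (fun i => i) k]
  simp [Finset.sum_range_id, Nat.choose_two_right]

/-- `inv(C₀(l,m,n)) = n·C(m,2)·C(l,2)`. -/
theorem stmt4 (l m n : ℕ) (hl : 1 ≤ l) (hm : 2 ≤ m) (hn : 1 ≤ n) :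
    invDC (lowestC l m n) = n * Nat.choose m 2 * Nat.choose l 2 := by
  classical
  set Tm := (Finset.Icc 1 m ×ˢ Finset.Icc 1 m).filter (fun q => q.1 < q.2) with hTm
  set Tl := (Finset.Icc 1 l ×ˢ Finset.Icc 1 l).filter (fun q => q.1 < q.2) with hTl
  set dom := Finset.range n ×ˢ (Tm ×ˢ Tl) with hdom
  have hmemdom : ∀ x : ℕ × ((ℕ × ℕ) × (ℕ × ℕ)), x ∈ dom ↔
      x.1 < n ∧ (1 ≤ x.2.1.1 ∧ x.2.1.2 ≤ m ∧ x.2.1.1 < x.2.1.2) ∧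
        (1 ≤ x.2.2.1 ∧ x.2.2.2 ≤ l ∧ x.2.2.1 < x.2.2.2) := by
    intro x
    simp only [hdom, hTm, hTl, Finset.mem_product, Finset.mem_range, Finset.mem_filter,
      Finset.mem_Icc]
    omega
  have key : dom.card =
      ((lowestC l m n ×ˢ lowestC l m n).filter
        (fun p => p.1.1 < p.2.1 ∧ p.2.2 < p.1.2)).card := by
    apply Finset.card_bij
      (fun x _ => ((x.1 * m + x.2.1.1, x.1 * l + x.2.2.2), (x.1 * m + x.2.1.2, x.1 * l + x.2.2.1)))
    · -- maps into target
      rintro ⟨p, ⟨a, b⟩, ⟨c, d⟩⟩ hx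
      obtain ⟨hp, ⟨ha, hb, hab⟩, ⟨hc, hd, hcd⟩⟩ := (hmemdom _).1 hx
      dsimp only at *
      simp only [Finset.mem_filter, Finset.mem_product]
      have e1 : (p * l + d - 1) / l = p := div_block (by omega) hd
      have e2 : (p * l + c - 1) / l = p := div_block hc (by omega)
      have hpm : (p + 1) * m ≤ m * n := by
        calc (p + 1) * m ≤ n * m := Nat.mul_le_mul_right m (by omega)
        _ = m * n := Nat.mul_comm n m
      have hpl : (p + 1) * l ≤ l * n := by
        calc (p + 1) * l ≤ n * l := Nat.mul_le_mul_right l (by omega)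
        _ = l * n := Nat.mul_comm n l
      have hpm' : (p + 1) * m = p * m + m := by ring
      have hpl' : (p + 1) * l = p * l + l := by ring
      refine ⟨⟨?_, ?_⟩, by omega, by omega⟩
      · rw [mem_lowestC, e1]; omega
      · rw [mem_lowestC, e2]; omega
    · -- injective
      rintro ⟨p, ⟨a, b⟩, ⟨c, d⟩⟩ hx ⟨p', ⟨a', b'⟩, ⟨c', d'⟩⟩ hx' heq
      obtain ⟨hp, ⟨ha, hb, hab⟩, ⟨hc, hd, hcd⟩⟩ := (hmemdom _).1 hx
      obtain ⟨hp', ⟨ha', hb', hab'⟩, ⟨hc', hd', hcd'⟩⟩ := (hmemdom _).1 hx'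
      clear hx hx'
      dsimp only at *
      simp only [Prod.mk.injEq] at heq
      obtain ⟨⟨h1, h2⟩, h3, h4⟩ := heq
      have hpp : p = p' := by
        have d1 := div_block (l := m) (p := p) (q := a) ha (by omega)
        have d2 := div_block (l := m) (p := p') (q := a') ha' (by omega)
        have d3 : (p * m + a - 1) / m = (p' * m + a' - 1) / m := by rw [h1]
        omega
      subst hpp
      simp only [Prod.mk.injEq, true_and]
      omega
    · -- surjective
      rintro ⟨⟨i1, j1⟩, ⟨i2, j2⟩⟩ hy
      simp only [Finset.mem_filter, Finset.mem_product] at hy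
      obtain ⟨⟨hy1, hy2⟩, hii, hjj⟩ := hy
      rw [mem_lowestC] at hy1 hy2
      obtain ⟨hi1a, hi1b, hj1a, hj1b, hr1a, hr1b⟩ := hy1
      obtain ⟨hi2a, hi2b, hj2a, hj2b, hr2a, hr2b⟩ := hy2
      set p1 := (j1 - 1) / l with hp1
      set p2 := (j2 - 1) / l with hp2
      have hle : p2 ≤ p1 := Nat.div_le_div_right (by omega)
      have hge : p1 ≤ p2 := by
        have h : p1 * m < (p2 + 1) * m := by omega
        have := Nat.lt_of_mul_lt_mul_right h
        omega
      have hpp : p1 = p2 := le_antisymm hge hle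
      have hpn : p1 < n := by
        rw [hp1, Nat.div_lt_iff_lt_mul (by omega : 0 < l)]
        calc j1 - 1 < l * n := by omega
        _ = n * l := Nat.mul_comm l n
      have hb1a : p1 * l ≤ j1 - 1 := by rw [hp1]; exact Nat.div_mul_le_self _ _
      have hb1b : j1 - 1 < p1 * l + l := by
        have h := Nat.div_add_mod (j1 - 1) l
        rw [← hp1] at h
        have h2 : (j1 - 1) % l < l := Nat.mod_lt _ (by omega)
        have h3 : l * p1 = p1 * l := Nat.mul_comm _ _
        omega
      have hb2a : p2 * l ≤ j2 - 1 := by rw [hp2]; exact Nat.div_mul_le_self _ _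
      have hb2b : j2 - 1 < p2 * l + l := by
        have h := Nat.div_add_mod (j2 - 1) l
        rw [← hp2] at h
        have h2 : (j2 - 1) % l < l := Nat.mod_lt _ (by omega)
        have h3 : l * p2 = p2 * l := Nat.mul_comm _ _
        omega
      rw [← hpp] at hr2a hr2b hb2a hb2b
      have hrm1 : (p1 + 1) * m = p1 * m + m := by ring
      have hrl1 : (p1 + 1) * l = p1 * l + l := by ring
      refine ⟨(p1, ((i1 - p1 * m, i2 - p1 * m), (j2 - p1 * l, j1 - p1 * l))), ?_, ?_⟩
      · rw [hmemdom _]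
        dsimp only
        refine ⟨hpn, ⟨by omega, by omega, by omega⟩, ⟨by omega, by omega, by omega⟩⟩
      · dsimp only
        simp only [Prod.mk.injEq]
        refine ⟨⟨by omega, by omega⟩, by omega, by omega⟩
  rw [invDC, ← key, hdom, Finset.card_product, Finset.card_product, Finset.card_range,
    hTm, hTl, card_ltPairs, card_ltPairs, Nat.mul_assoc]
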